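/- For every positive integer m, the sum over q from 1 to m-1 of C(m,q)·C(m-1,q)/C(2m,2q) (as rational numbers, where C denotes the binomial coefficient) equals -1 + (1/2)·4^m·(m!)^2/(2m)!. -/

import Mathlib

open Finset Nat

-- symmetry: sum of q * a q * a (n-q) = sum of (n-q) * a q * a (n-q)
lemma sym_sum (n : ℕ) :
    ∑ q ∈ range (n+1), q * centralBinom q * centralBinom (n-q)
    = ∑ q ∈ range (n+1), (n-q) * centralBinom q * centralBinom (n-q) := by
  rw [← Finset.sum_range_reflect]
  apply Finset.sum_congr rfl
  intro q hq
  have hq' : q ≤ n := Nat.lt_succ_iff.mp (Finset.mem_range.mp hq)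
  have : n + 1 - 1 - q = n - q := by omega
  rw [this, Nat.sub_sub_self hq']
  ring

lemma two_mul_weighted (n : ℕ) :
    2 * ∑ q ∈ range (n+1), q * centralBinom q * centralBinom (n-q)
    = n * ∑ q ∈ range (n+1), centralBinom q * centralBinom (n-q) := by
  rw [two_mul]
  nth_rewrite 1 [sym_sum]
  rw [← Finset.sum_add_distrib, Finset.mul_sum]
  refine Finset.sum_congr rfl fun q hq => ?_
  have hq' : q ≤ n := Nat.lt_succ_iff.mp (Finset.mem_range.mp hq)
  have h : (n - q) + q = n := by omega
  rw [mul_assoc, mul_assoc, ← add_mul, h]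

lemma cb_conv (n : ℕ) :
    ∑ q ∈ range (n+1), centralBinom q * centralBinom (n-q) = 4 ^ n := by
  induction n with
  | zero => simp [centralBinom]
  | succ n ih =>
    have key : (n+1) * ∑ q ∈ range (n+2), centralBinom q * centralBinom (n+1-q)
        = (n+1) * 4 ^ (n+1) := by
      have h1 : (n+1) * ∑ q ∈ range (n+2), centralBinom q * centralBinom (n+1-q)
          = 2 * ∑ q ∈ range (n+2), q * centralBinom q * centralBinom (n+1-q) := by
        rw [two_mul_weighted]
      have h2 : ∑ q ∈ range (n+2), q * centralBinom q * centralBinom (n+1-q)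
          = ∑ j ∈ range (n+1), (j+1) * centralBinom (j+1) * centralBinom (n-j) := by
        rw [Finset.sum_range_succ'] -- splits off q = 0
        simp
      have h3 : ∑ j ∈ range (n+1), (j+1) * centralBinom (j+1) * centralBinom (n-j)
          = ∑ j ∈ range (n+1), 2 * (2*j+1) * centralBinom j * centralBinom (n-j) := by
        apply Finset.sum_congr rfl
        intro j _
        rw [succ_mul_centralBinom_succ]
      have h4 : ∑ j ∈ range (n+1), 2 * (2*j+1) * centralBinom j * centralBinom (n-j)
          = 4 * (∑ j ∈ range (n+1), j * centralBinom j * centralBinom (n-j))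
            + 2 * ∑ j ∈ range (n+1), centralBinom j * centralBinom (n-j) := by
        rw [Finset.mul_sum, Finset.mul_sum, ← Finset.sum_add_distrib]
        apply Finset.sum_congr rfl
        intro j _
        ring
      have h5 : 2 * ∑ j ∈ range (n+1), j * centralBinom j * centralBinom (n-j)
          = n * 4 ^ n := by rw [two_mul_weighted, ih]
      calc (n+1) * ∑ q ∈ range (n+2), centralBinom q * centralBinom (n+1-q)
          = 2 * ∑ q ∈ range (n+2), q * centralBinom q * centralBinom (n+1-q) := h1
        _ = 2 * ∑ j ∈ range (n+1), (j+1) * centralBinom (j+1) * centralBinom (n-j) := by rw [h2]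
        _ = 2 * ∑ j ∈ range (n+1), 2 * (2*j+1) * centralBinom j * centralBinom (n-j) := by rw [h3]
        _ = 2 * (4 * (∑ j ∈ range (n+1), j * centralBinom j * centralBinom (n-j))
            + 2 * ∑ j ∈ range (n+1), centralBinom j * centralBinom (n-j)) := by rw [h4]
        _ = 4 * (2 * ∑ j ∈ range (n+1), j * centralBinom j * centralBinom (n-j))
            + 4 * ∑ j ∈ range (n+1), centralBinom j * centralBinom (n-j) := by ring
        _ = 4 * (n * 4 ^ n) + 4 * 4 ^ n := by rw [h5, ih]
        _ = (n+1) * 4 ^ (n+1) := by ring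
    exact Nat.eq_of_mul_eq_mul_left (by omega) key

lemma weighted_sum (n : ℕ) :
    2 * ∑ q ∈ range (n+1), (n-q) * centralBinom q * centralBinom (n-q)
    = n * 4 ^ n := by
  rw [← sym_sum, two_mul_weighted, cb_conv]

set_option maxHeartbeats 1000000 in
lemma term_eq (m q : ℕ) (hq : q < m) :
    ((m.choose q : ℚ) * ((m - 1).choose q : ℚ)) / ((2 * m).choose (2 * q) : ℚ)
    = (((m - q) * centralBinom q * centralBinom (m - q) : ℕ) : ℚ)
        * (m.factorial : ℚ) ^ 2 / ((m : ℚ) * ((2 * m).factorial : ℚ)) := by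
  have hqm : q ≤ m := hq.le
  have hqm1 : q ≤ m - 1 := by omega
  have h2q : 2 * q ≤ 2 * m := by omega
  have e1 : (m.choose q : ℚ) = m.factorial / (q.factorial * (m - q).factorial) :=
    Nat.cast_choose ℚ hqm
  have e2 : ((m - 1).choose q : ℚ)
      = (m - 1).factorial / (q.factorial * (m - 1 - q).factorial) :=
    Nat.cast_choose ℚ hqm1
  have e3 : ((2 * m).choose (2 * q) : ℚ)
      = (2 * m).factorial / ((2 * q).factorial * (2 * m - 2 * q).factorial) :=
    Nat.cast_choose ℚ h2q
  have e4 : (centralBinom q : ℚ) = (2 * q).factorial / (q.factorial * q.factorial) := by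
    rw [centralBinom, Nat.cast_choose ℚ (by omega : q ≤ 2 * q),
      show 2 * q - q = q from by omega]
  have e5 : (centralBinom (m - q) : ℚ)
      = (2 * (m - q)).factorial / ((m - q).factorial * (m - q).factorial) := by
    rw [centralBinom, Nat.cast_choose ℚ (by omega : m - q ≤ 2 * (m - q)),
      show 2 * (m - q) - (m - q) = m - q from by omega]
  have hm : 0 < m := by omega
  have hmq : 0 < m - q := by omega
  have f1 : (m.factorial : ℚ) = m * (m - 1).factorial := by
    rw [← Nat.mul_factorial_pred hm.ne']; push_cast; ring
  have f2 : ((m - q).factorial : ℚ) = (m - q : ℕ) * (m - q - 1).factorial := by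
    rw [← Nat.mul_factorial_pred hmq.ne']; push_cast; ring
  have g1 : m - 1 - q = m - q - 1 := by omega
  have g2 : 2 * m - 2 * q = 2 * (m - q) := by omega
  rw [e1, e2, e3, g1, g2]
  push_cast [e4, e5]
  rw [f1, f2]
  have h1 : (q.factorial : ℚ) ≠ 0 := Nat.cast_ne_zero.mpr q.factorial_ne_zero
  have h2 : ((m - q - 1).factorial : ℚ) ≠ 0 := Nat.cast_ne_zero.mpr (Nat.factorial_ne_zero _)
  have h3 : ((m - 1).factorial : ℚ) ≠ 0 := Nat.cast_ne_zero.mpr (Nat.factorial_ne_zero _)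
  have h4 : ((2 * q).factorial : ℚ) ≠ 0 := Nat.cast_ne_zero.mpr (Nat.factorial_ne_zero _)
  have h5 : ((2 * (m - q)).factorial : ℚ) ≠ 0 := Nat.cast_ne_zero.mpr (Nat.factorial_ne_zero _)
  have h6 : ((2 * m).factorial : ℚ) ≠ 0 := Nat.cast_ne_zero.mpr (Nat.factorial_ne_zero _)
  have h7 : ((m : ℚ)) ≠ 0 := Nat.cast_ne_zero.mpr hm.ne'
  have h8 : ((m - q : ℕ) : ℚ) ≠ 0 := Nat.cast_ne_zero.mpr hmq.ne'
  have h9 : (m : ℚ) - (q : ℚ) ≠ 0 :=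
    sub_ne_zero.mpr (by exact_mod_cast hq.ne')
  field_simp

theorem sum_q_identity (m : ℕ) (hm : 1 ≤ m) :
    ∑ q ∈ Finset.Icc 1 (m - 1),
      ((m.choose q : ℚ) * ((m - 1).choose q : ℚ)) / ((2 * m).choose (2 * q) : ℚ)
    = -1 + (1 / 2) * 4 ^ m * (m.factorial : ℚ) ^ 2 / ((2 * m).factorial : ℚ) := by
  have hins : range m = insert 0 (Finset.Icc 1 (m - 1)) := by
    ext q
    simp only [Finset.mem_range, Finset.mem_insert, Finset.mem_Icc]
    omega
  have h0 : (0 : ℕ) ∉ Finset.Icc 1 (m - 1) := by simp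
  have hsum : ∑ q ∈ range m,
      ((m.choose q : ℚ) * ((m - 1).choose q : ℚ)) / ((2 * m).choose (2 * q) : ℚ)
      = 1 + ∑ q ∈ Finset.Icc 1 (m - 1),
          ((m.choose q : ℚ) * ((m - 1).choose q : ℚ)) / ((2 * m).choose (2 * q) : ℚ) := by
    rw [hins, Finset.sum_insert h0]
    simp
  have hterm : ∑ q ∈ range m,
      ((m.choose q : ℚ) * ((m - 1).choose q : ℚ)) / ((2 * m).choose (2 * q) : ℚ)
      = (((∑ q ∈ range (m+1), (m - q) * centralBinom q * centralBinom (m - q) : ℕ)) : ℚ)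
        * (m.factorial : ℚ) ^ 2 / ((m : ℚ) * ((2 * m).factorial : ℚ)) := by
    rw [Finset.sum_range_succ, Nat.sub_self, zero_mul, zero_mul, add_zero]
    push_cast [Finset.sum_div, Finset.sum_mul]
    apply Finset.sum_congr rfl
    intro q hq
    have := term_eq m q (Finset.mem_range.mp hq)
    push_cast at this
    rw [this]
  have hw : ((∑ q ∈ range (m+1), (m - q) * centralBinom q * centralBinom (m - q) : ℕ) : ℚ)
      = (m : ℚ) * 4 ^ m / 2 := by
    have h2 := congrArg (fun x : ℕ => (x : ℚ)) (weighted_sum m)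
    simp only [Nat.cast_mul, Nat.cast_pow, Nat.cast_ofNat] at h2
    linarith
  have hm' : (m : ℚ) ≠ 0 := Nat.cast_ne_zero.mpr (by omega)
  have h6 : ((2 * m).factorial : ℚ) ≠ 0 := Nat.cast_ne_zero.mpr (Nat.factorial_ne_zero _)
  have : (1 : ℚ) + ∑ q ∈ Finset.Icc 1 (m - 1),
      ((m.choose q : ℚ) * ((m - 1).choose q : ℚ)) / ((2 * m).choose (2 * q) : ℚ)
      = ((m : ℚ) * 4 ^ m / 2) * (m.factorial : ℚ) ^ 2 / ((m : ℚ) * ((2 * m).factorial : ℚ)) := by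
    rw [← hsum, hterm, hw]
  have hAB : (m : ℚ) * 4 ^ m / 2 * (m.factorial : ℚ) ^ 2 / ((m : ℚ) * ((2 * m).factorial : ℚ))
      = (1 / 2) * 4 ^ m * (m.factorial : ℚ) ^ 2 / ((2 * m).factorial : ℚ) := by
    field_simp
  rw [hAB] at this
  linarith
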